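/- arXiv:1602.07652 — 2 statements merged into one kernel-verified Lean document; each statement's English description precedes it below -/
import Mathlib

section
/- Let C be a block tridiagonal N×N matrix with block structure C = tridiag(C_{j,j-1}, C_{j,j}, C_{j,j+1}) for j = 1,...,n_z, and let v solve Cv = g. Fix a contiguous block range (a layer) {j : a ≤ j ≤ b}, and let C^ℓ be any matrix coinciding with C on all rows indexed within the layer interior. Then the local solution w of C^ℓ w = χ_layer g - δ_b C_{b,b+1} v_{b+1} + δ_{b+1} C_{b+1,b} v_b - δ_a C_{a,a-1} v_{a-1} + δ_{a-1} C_{a-1,a} v_a coincides with v on the layer, i.e., w_j = v_j for a ≤ j ≤ b, provided C^ℓ restricted to the layer with these boundary corrections is uniquely solvable. (Discrete Green's representation formula for block tridiagonal systems.) -/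
open scoped BigOperators Matrix

/-- discrete Green's representation formula for block tridiagonal systems:
let `C` be block tridiagonal with `C v = g`, fix a layer `a ≤ j ≤ b`, and let `Cˡ` be any
block tridiagonal matrix coinciding with `C` on all rows of the layer.  If `w` solves the
local system with right-hand side
`χ_layer g - δ_b Cˡ_{b,b+1} v_{b+1} + δ_{b+1} Cˡ_{b+1,b} v_b - δ_a Cˡ_{a,a-1} v_{a-1}
 + δ_{a-1} Cˡ_{a-1,a} v_a`,
and `Cˡ` is uniquely solvable (injective), then `w` coincides with `v` on the layer. -/
theorem discrete_greens_representation_formula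
    (nx nz : ℕ)
    (C Cl : Fin nz → Fin nz → Matrix (Fin nx) (Fin nx) ℂ)
    (htriC : ∀ j k : Fin nz, 1 < ((j : ℤ) - (k : ℤ)).natAbs → C j k = 0)
    (htriCl : ∀ j k : Fin nz, 1 < ((j : ℤ) - (k : ℤ)).natAbs → Cl j k = 0)
    (v g : Fin nz → Fin nx → ℂ)
    (hv : ∀ j, ∑ k, C j k *ᵥ v k = g j)
    (a b : Fin nz) (ha : 0 < (a : ℕ)) (hb : (b : ℕ) + 1 < nz) (hab : (a : ℕ) ≤ (b : ℕ))
    -- Cˡ coincides with C on all rows within the layer: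
    (hcompat : ∀ j : Fin nz, (a : ℕ) ≤ (j : ℕ) → (j : ℕ) ≤ (b : ℕ) → ∀ k, Cl j k = C j k)
    -- unique solvability of the local system:
    (hinj : ∀ w₁ w₂ : Fin nz → Fin nx → ℂ,
      (∀ j, ∑ k, Cl j k *ᵥ w₁ k = ∑ k, Cl j k *ᵥ w₂ k) → w₁ = w₂)
    (w : Fin nz → Fin nx → ℂ)
    (hw : ∀ j : Fin nz, ∑ k, Cl j k *ᵥ w k
        = (if (a : ℕ) ≤ (j : ℕ) ∧ (j : ℕ) ≤ (b : ℕ) then g j else 0)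
          + (if j = b then -(Cl b ⟨(b : ℕ) + 1, hb⟩ *ᵥ v ⟨(b : ℕ) + 1, hb⟩) else 0)
          + (if j = (⟨(b : ℕ) + 1, hb⟩ : Fin nz) then Cl ⟨(b : ℕ) + 1, hb⟩ b *ᵥ v b else 0)
          + (if j = a then
              -(Cl a ⟨(a : ℕ) - 1, by omega⟩ *ᵥ v ⟨(a : ℕ) - 1, by omega⟩) else 0)
          + (if j = (⟨(a : ℕ) - 1, by omega⟩ : Fin nz) then
              Cl ⟨(a : ℕ) - 1, by omega⟩ a *ᵥ v a else 0)) :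
    ∀ j : Fin nz, (a : ℕ) ≤ (j : ℕ) → (j : ℕ) ≤ (b : ℕ) → w j = v j := by
  classical
  set B1 : Fin nz := ⟨(b : ℕ) + 1, hb⟩ with hB1
  set A1 : Fin nz := ⟨(a : ℕ) - 1, by omega⟩ with hA1
  have hB1v : (B1 : ℕ) = (b : ℕ) + 1 := rfl
  have hA1v : (A1 : ℕ) = (a : ℕ) - 1 := rfl
  set w' : Fin nz → Fin nx → ℂ :=
    fun k => if (a : ℕ) ≤ (k : ℕ) ∧ (k : ℕ) ≤ (b : ℕ) then v k else 0 with hw'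
  have hAB : A1 ≠ B1 := fun h => by rw [Fin.ext_iff] at h; omega
  have key : ∀ j : Fin nz, ∑ k, Cl j k *ᵥ w' k
      = (if (a : ℕ) ≤ (j : ℕ) ∧ (j : ℕ) ≤ (b : ℕ) then g j else 0)
          + (if j = b then -(Cl b B1 *ᵥ v B1) else 0)
          + (if j = B1 then Cl B1 b *ᵥ v b else 0)
          + (if j = a then -(Cl a A1 *ᵥ v A1) else 0)
          + (if j = A1 then Cl A1 a *ᵥ v a else 0) := by
    intro j
    by_cases h1 : (a : ℕ) ≤ (j : ℕ) ∧ (j : ℕ) ≤ (b : ℕ)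
    · -- j in the layer
      have hsplit : ∀ k, Cl j k *ᵥ w' k
          = C j k *ᵥ v k
            - ((if k = A1 then (if j = a then C j k *ᵥ v k else 0) else 0)
              + (if k = B1 then (if j = b then C j k *ᵥ v k else 0) else 0)) := by
        intro k
        rw [hcompat j h1.1 h1.2]
        by_cases hk : (a : ℕ) ≤ (k : ℕ) ∧ (k : ℕ) ≤ (b : ℕ)
        · have hkA : k ≠ A1 := fun h => by rw [Fin.ext_iff] at h; omega
          have hkB : k ≠ B1 := fun h => by rw [Fin.ext_iff] at h; omega
          rw [show w' k = v k from if_pos hk, if_neg hkA, if_neg hkB]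
          simp
        · rw [show w' k = (0 : Fin nx → ℂ) from if_neg hk, Matrix.mulVec_zero]
          by_cases hkA : k = A1
          · subst hkA
            rw [if_pos rfl, if_neg hAB]
            by_cases hja : j = a
            · rw [if_pos hja]; abel
            · have hja' : (j : ℕ) ≠ (a : ℕ) := fun h => hja (Fin.ext h)
              have hC0 : C j A1 = 0 := htriC _ _ (by omega)
              rw [if_neg hja, hC0, Matrix.zero_mulVec]; abel
          · by_cases hkB : k = B1
            · subst hkB
              rw [if_neg hkA, if_pos rfl]
              by_cases hjb : j = b
              · rw [if_pos hjb]; abel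
              · have hjb' : (j : ℕ) ≠ (b : ℕ) := fun h => hjb (Fin.ext h)
                have hC0 : C j B1 = 0 := htriC _ _ (by omega)
                rw [if_neg hjb, hC0, Matrix.zero_mulVec]; abel
            · have h1' : (k : ℕ) ≠ (a : ℕ) - 1 := fun h => hkA (Fin.ext h)
              have h2' : (k : ℕ) ≠ (b : ℕ) + 1 := fun h => hkB (Fin.ext h)
              have hC0 : C j k = 0 := htriC _ _ (by omega)
              rw [if_neg hkA, if_neg hkB, hC0, Matrix.zero_mulVec]; abel
      simp only [hsplit]
      rw [Finset.sum_sub_distrib, Finset.sum_add_distrib, hv,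
        Finset.sum_ite_eq' Finset.univ A1, Finset.sum_ite_eq' Finset.univ B1]
      have hjB1 : j ≠ B1 := fun h => by rw [Fin.ext_iff] at h; omega
      have hjA1 : j ≠ A1 := fun h => by rw [Fin.ext_iff] at h; omega
      have hCa : Cl a A1 = C a A1 := hcompat a le_rfl hab A1
      have hCb : Cl b B1 = C b B1 := hcompat b hab le_rfl B1
      rw [if_pos h1, if_neg hjB1, if_neg hjA1, hCa, hCb]
      simp only [Finset.mem_univ, if_true]
      by_cases hja : j = a <;> by_cases hjb : j = b
      · have e1 : a = b := hja.symm.trans hjb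
        simp only [hja, e1, if_pos rfl] <;> (abel_nf; rw [add_right_inj]; exact add_comm _ _)
      · have e1 : ¬ a = b := fun h => hjb (hja.trans h)
        simp only [hja, if_pos rfl, if_neg e1] <;> abel
      · have e1 : ¬ b = a := fun h => hja (hjb.trans h)
        simp only [hjb, if_pos rfl, if_neg e1] <;> abel
      · simp only [if_neg hja, if_neg hjb] <;> abel
    · by_cases hjB : (j : ℕ) = (b : ℕ) + 1
      · have hj : j = B1 := Fin.ext hjB
        subst hj
        have hjb : B1 ≠ b := fun h => by rw [Fin.ext_iff] at h; omega
        have hja : B1 ≠ a := fun h => by rw [Fin.ext_iff] at h; omega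
        rw [Finset.sum_eq_single_of_mem b (Finset.mem_univ b), if_neg h1, if_neg hjb,
          if_pos rfl, if_neg hja, if_neg hAB.symm,
          show w' b = v b from if_pos ⟨hab, le_rfl⟩]
        · abel
        · intro k _ hk
          by_cases hkl : (a : ℕ) ≤ (k : ℕ) ∧ (k : ℕ) ≤ (b : ℕ)
          · have hk' : (k : ℕ) ≠ (b : ℕ) := fun h => hk (Fin.ext h)
            rw [htriCl _ _ (by omega), Matrix.zero_mulVec]
          · rw [show w' k = (0 : Fin nx → ℂ) from if_neg hkl, Matrix.mulVec_zero]
      · by_cases hjA : (j : ℕ) = (a : ℕ) - 1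
        · have hj : j = A1 := Fin.ext hjA
          subst hj
          have hjb : A1 ≠ b := fun h => by rw [Fin.ext_iff] at h; omega
          have hja : A1 ≠ a := fun h => by rw [Fin.ext_iff] at h; omega
          rw [Finset.sum_eq_single_of_mem a (Finset.mem_univ a), if_neg h1, if_neg hjb,
            if_neg hAB, if_neg hja, if_pos rfl,
            show w' a = v a from if_pos ⟨le_rfl, hab⟩]
          · abel
          · intro k _ hk
            by_cases hkl : (a : ℕ) ≤ (k : ℕ) ∧ (k : ℕ) ≤ (b : ℕ)
            · have hk' : (k : ℕ) ≠ (a : ℕ) := fun h => hk (Fin.ext h)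
              rw [htriCl _ _ (by omega), Matrix.zero_mulVec]
            · rw [show w' k = (0 : Fin nx → ℂ) from if_neg hkl, Matrix.mulVec_zero]
        · have hjb : j ≠ b := fun h => by rw [Fin.ext_iff] at h; omega
          have hja : j ≠ a := fun h => by rw [Fin.ext_iff] at h; omega
          have hjB1 : j ≠ B1 := fun h => by rw [Fin.ext_iff] at h; omega
          have hjA1 : j ≠ A1 := fun h => by rw [Fin.ext_iff] at h; omega
          rw [Finset.sum_eq_zero, if_neg h1, if_neg hjb, if_neg hjB1, if_neg hja,
            if_neg hjA1]
          · abel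
          · intro k _
            by_cases hkl : (a : ℕ) ≤ (k : ℕ) ∧ (k : ℕ) ≤ (b : ℕ)
            · rw [htriCl _ _ (by omega), Matrix.zero_mulVec]
            · rw [show w' k = (0 : Fin nx → ℂ) from if_neg hkl, Matrix.mulVec_zero]
  have hwe : w = w' := hinj w w' (fun j => (hw j).trans (key j).symm)
  intro j hja hjb
  rw [hwe]
  exact if_pos ⟨hja, hjb⟩
end

section
/- Multiplicative (Gauss-Seidel) domain-decomposition sweep exactness: suppose the domain indices {1,...,n_z} are partitioned into L contiguous layers, C is block tridiagonal and each exact local matrix C^ℓ (the restriction of C to layer ℓ with exact transmission data) is invertible. If in the downward sweep of Algorithm 1 the transmitted traces w^{ℓ-1}_0, w^{ℓ-1}_1 used in layer ℓ equal the corresponding traces of the true solution v of Cv = g, then the local solve in layer ℓ reproduces the true solution restricted to that layer. -/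
open scoped BigOperators Matrix

/-- exactness of the Gauss–Seidel downward sweep with exact transmitted
traces: let `C` be block tridiagonal with true solution `C v = g`, and consider a layer
consisting of the blocks `j ≤ b` (the layer reached by the downward sweep), with local
matrix `Cˡ` block tridiagonal, coinciding with `C` on all rows of the layer (compatibility
condition) and injective (invertible).  If the transmitted traces used in the sweep,
`w^{ℓ-1}_1` and `w^{ℓ-1}_0`, equal the corresponding traces `v_{b+1}` and `v_b` of the true
solution, then the local solve of Algorithm 1, with right-hand side
`χ_layer g - δ_b Cˡ_{b,b+1} w^{ℓ-1}_1 + δ_{b+1} Cˡ_{b+1,b} w^{ℓ-1}_0`,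
reproduces the true solution restricted to the layer. -/
theorem gauss_seidel_sweep_exact_with_exact_traces
    (nx nz : ℕ)
    (C Cl : Fin nz → Fin nz → Matrix (Fin nx) (Fin nx) ℂ)
    (htriC : ∀ j k : Fin nz, 1 < ((j : ℤ) - (k : ℤ)).natAbs → C j k = 0)
    (htriCl : ∀ j k : Fin nz, 1 < ((j : ℤ) - (k : ℤ)).natAbs → Cl j k = 0)
    (v g : Fin nz → Fin nx → ℂ)
    (hv : ∀ j, ∑ k, C j k *ᵥ v k = g j)
    (b : Fin nz) (hb : (b : ℕ) + 1 < nz)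
    -- compatibility: Cˡ coincides with C on all rows of the layer {j ≤ b}:
    (hcompat : ∀ j : Fin nz, (j : ℕ) ≤ (b : ℕ) → ∀ k, Cl j k = C j k)
    -- unique solvability of the local system:
    (hinj : ∀ w₁ w₂ : Fin nz → Fin nx → ℂ,
      (∀ j, ∑ k, Cl j k *ᵥ w₁ k = ∑ k, Cl j k *ᵥ w₂ k) → w₁ = w₂)
    -- exact transmitted traces:
    (trace₁ trace₀ : Fin nx → ℂ)
    (htrace₁ : trace₁ = v ⟨(b : ℕ) + 1, hb⟩) (htrace₀ : trace₀ = v b)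
    -- the local solve of the downward sweep of Algorithm 1:
    (w : Fin nz → Fin nx → ℂ)
    (hw : ∀ j : Fin nz, ∑ k, Cl j k *ᵥ w k
        = (if (j : ℕ) ≤ (b : ℕ) then g j else 0)
          + (if j = b then -(Cl b ⟨(b : ℕ) + 1, hb⟩ *ᵥ trace₁) else 0)
          + (if j = (⟨(b : ℕ) + 1, hb⟩ : Fin nz) then Cl ⟨(b : ℕ) + 1, hb⟩ b *ᵥ trace₀
             else 0)) :
    ∀ j : Fin nz, (j : ℕ) ≤ (b : ℕ) → w j = v j := by
  set b1 : Fin nz := ⟨(b : ℕ) + 1, hb⟩ with hb1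
  set u : Fin nz → Fin nx → ℂ := fun j => if (j : ℕ) ≤ (b : ℕ) then v j else 0 with hu
  have hub : ∀ k : Fin nz, (k : ℕ) ≤ (b : ℕ) → u k = v k := fun k hk => if_pos hk
  have hub' : ∀ k : Fin nz, ¬ (k : ℕ) ≤ (b : ℕ) → u k = 0 := fun k hk => if_neg hk
  have hb1v : (b1 : ℕ) = (b : ℕ) + 1 := rfl
  have key : ∀ j : Fin nz, ∑ k, Cl j k *ᵥ u k = ∑ k, Cl j k *ᵥ w k := by
    intro j
    rw [hw j]
    by_cases hjb : j = b
    · -- row b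
      subst hjb
      have hterm : ∀ k : Fin nz, Cl j k *ᵥ u k
          = C j k *ᵥ v k - (if k = b1 then C j b1 *ᵥ v b1 else 0) := by
        intro k
        by_cases hk : (k : ℕ) ≤ (j : ℕ)
        · have hkb1 : k ≠ b1 := by
            intro h
            rw [h, hb1v] at hk
            omega
          rw [hub k hk, hcompat j le_rfl k, if_neg hkb1, sub_zero]
        · rw [hub' k hk, Matrix.mulVec_zero]
          by_cases hkb1 : k = b1
          · subst hkb1
            rw [if_pos rfl, sub_self]
          · rw [if_neg hkb1]
            have hC : C j k = 0 := by
              apply htriC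
              have hkne : (k : ℕ) ≠ (j : ℕ) + 1 := by
                intro h
                exact hkb1 (Fin.ext h)
              omega
            rw [hC, Matrix.zero_mulVec, sub_zero]
      calc ∑ k, Cl j k *ᵥ u k
          = ∑ k, (C j k *ᵥ v k - (if k = b1 then C j b1 *ᵥ v b1 else 0)) := by
            exact Finset.sum_congr rfl fun k _ => hterm k
        _ = (∑ k, C j k *ᵥ v k) - ∑ k, (if k = b1 then C j b1 *ᵥ v b1 else 0) := by
            rw [Finset.sum_sub_distrib]
        _ = g j - C j b1 *ᵥ v b1 := by
            rw [hv j, Finset.sum_ite_eq' Finset.univ b1, if_pos (Finset.mem_univ _)]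
        _ = _ := by
            have hjb1 : j ≠ b1 := by
              intro h
              have := congrArg Fin.val h
              rw [hb1v] at this
              omega
            rw [if_pos le_rfl, if_pos rfl, if_neg hjb1, htrace₁,
              hcompat j le_rfl b1, add_zero, sub_eq_add_neg]
    · by_cases hj : (j : ℕ) ≤ (b : ℕ)
      · -- interior layer row, j < b
        have hjlt : (j : ℕ) < (b : ℕ) := lt_of_le_of_ne hj (fun h => hjb (Fin.ext h))
        have hjb1 : j ≠ b1 := by
          intro h
          have := congrArg Fin.val h
          rw [hb1v] at this
          omega
        have hterm : ∀ k : Fin nz, Cl j k *ᵥ u k = C j k *ᵥ v k := by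
          intro k
          by_cases hk : (k : ℕ) ≤ (b : ℕ)
          · rw [hub k hk, hcompat j hj k]
          · have hC : C j k = 0 := htriC j k (by omega)
            rw [hub' k hk, hC, Matrix.mulVec_zero, Matrix.zero_mulVec]
        rw [Finset.sum_congr rfl fun k _ => hterm k, hv j,
          if_pos hj, if_neg hjb, if_neg hjb1, add_zero, add_zero]
      · by_cases hjb1 : j = b1
        · -- row b+1
          subst hjb1
          have hsum : ∑ k, Cl b1 k *ᵥ u k = Cl b1 b *ᵥ u b := by
            apply Finset.sum_eq_single b
            · intro k _ hkb
              by_cases hk : (k : ℕ) ≤ (b : ℕ)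
              · have hklt : (k : ℕ) < (b : ℕ) :=
                  lt_of_le_of_ne hk (fun h => hkb (Fin.ext h))
                have hC : Cl b1 k = 0 := htriCl b1 k (by omega)
                rw [hC, Matrix.zero_mulVec]
              · rw [hub' k hk, Matrix.mulVec_zero]
            · intro h
              exact absurd (Finset.mem_univ b) h
          rw [hsum, hub b le_rfl, htrace₀,
            if_neg (by omega : ¬ (b1 : ℕ) ≤ (b : ℕ)),
            if_neg (by intro h; have := congrArg Fin.val h; omega),
            if_pos rfl, zero_add, zero_add]
        · -- rows below the layer, j > b+1
          have hjgt : (b : ℕ) + 1 < (j : ℕ) := by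
            have : (j : ℕ) ≠ (b : ℕ) + 1 := fun h => hjb1 (Fin.ext h)
            omega
          have hsum : ∑ k, Cl j k *ᵥ u k = 0 := by
            apply Finset.sum_eq_zero
            intro k _
            by_cases hk : (k : ℕ) ≤ (b : ℕ)
            · rw [htriCl j k (by omega), Matrix.zero_mulVec]
            · rw [hub' k hk, Matrix.mulVec_zero]
          rw [hsum, if_neg hj, if_neg hjb, if_neg hjb1, add_zero, add_zero]
  have huw : u = w := hinj u w key
  intro j hj
  rw [← huw, hub j hj]
end
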